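/- Let k ≥ 2 and let P be a finite nonempty set of integers. There exists an integer t such that p + t is k-free for every p ∈ P if and only if for every prime p the residues of P modulo p^k do not cover all of ℤ/p^kℤ. -/

import Mathlib

/-- An integer `n` is `k`-free if `q^k ∤ n` for every prime `q`. -/
def KFree (k : ℕ) (n : ℤ) : Prop := ∀ q : ℕ, q.Prime → ¬ ((q : ℤ)^k ∣ n)

/-- Integer Chinese remainder theorem over a finset of primes, prime-power moduli. -/
lemma crt_aux (k : ℕ) (S : Finset ℕ) (hS : ∀ q ∈ S, Nat.Prime q) (f : ℕ → ℤ) :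
    ∃ a : ℤ, ∀ q ∈ S, ((q : ℤ)^k) ∣ a - f q := by
  classical
  induction S using Finset.induction_on with
  | empty => exact ⟨0, by simp⟩
  | @insert q S hqS ih =>
    obtain ⟨a, ha⟩ := ih (fun q' hq' => hS q' (Finset.mem_insert_of_mem hq'))
    have hq : q.Prime := hS q (Finset.mem_insert_self _ _)
    set M : ℕ := ∏ q' ∈ S, q'^k with hM
    have hcopN : Nat.Coprime (q^k) M := by
      apply Nat.Coprime.pow_left
      apply Nat.Coprime.prod_right
      intro q' hq'
      apply Nat.Coprime.pow_right
      exact (Nat.coprime_primes hq (hS q' (Finset.mem_insert_of_mem hq'))).mpr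
        (by rintro rfl; exact hqS hq')
    have hcop : IsCoprime ((q:ℤ)^k) (M:ℤ) := by
      have := Nat.isCoprime_iff_coprime.mpr hcopN
      push_cast at this
      exact this
    obtain ⟨u, v, huv⟩ := hcop
    refine ⟨f q * (v * M) + a * (u * (q:ℤ)^k), ?_⟩
    intro q' hq'
    rcases Finset.mem_insert.mp hq' with rfl | hq'
    · have : f q' * (v * M) + a * (u * (q':ℤ)^k) - f q' =
        (q':ℤ)^k * (u * (a - f q')) + f q' * (u * (q':ℤ)^k + v * M - 1) := by ring
      rw [this, huv]
      simp [dvd_add, Dvd.intro _ rfl]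
    · have hdvdM : ((q':ℤ)^k) ∣ (M:ℤ) := by
        have : q'^k ∣ M := Finset.dvd_prod_of_mem _ hq'
        exact_mod_cast Int.natCast_dvd_natCast.mpr this
      have : f q * (v * M) + a * (u * (q:ℤ)^k) - f q' =
        (M:ℤ) * (v * (f q - a)) + (a - f q') + a * (u * (q:ℤ)^k + v * M - 1) := by ring
      rw [this, huv]
      simp only [sub_self, mul_zero, add_zero]
      exact dvd_add (hdvdM.mul_right _) (ha q' hq')

/-- Counting multiples in an arithmetic progression. -/
lemma count_aux (N M d : ℕ) (c : ℤ) (hcop : IsCoprime ((d:ℕ):ℤ) ((M:ℕ):ℤ)) :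
    ((Finset.Icc 1 N).filter (fun m : ℕ => (d:ℤ) ∣ c + (M:ℤ) * (m:ℤ))).card ≤ N / d + 1 := by
  classical
  have h := Finset.card_le_card_of_injOn (fun m => m / d)
    (s := (Finset.Icc 1 N).filter (fun m : ℕ => (d:ℤ) ∣ c + (M:ℤ) * (m:ℤ)))
    (t := Finset.range (N / d + 1)) ?_ ?_
  · simpa using h
  · intro m hm
    simp only [Finset.coe_filter, Set.mem_setOf_eq, Finset.mem_filter, Finset.mem_Icc] at hm
    simp only [Finset.coe_range, Set.mem_Iio, Finset.mem_range]
    exact Nat.lt_succ_of_le (Nat.div_le_div_right hm.1.2)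
  · intro m hm m' hm' hmm
    simp only [Finset.coe_filter, Set.mem_setOf_eq, Finset.mem_Icc] at hm hm'
    have h1 : (d:ℤ) ∣ (M:ℤ) * ((m:ℤ) - m') := by
      have := dvd_sub hm.2 hm'.2
      have e : c + M * m - (c + M * m') = (M:ℤ) * ((m:ℤ) - m') := by push_cast; ring
      rwa [e] at this
    have h2 : (d:ℤ) ∣ (m:ℤ) - (m':ℤ) := hcop.dvd_of_dvd_mul_left h1
    have h3 : m % d = m' % d := by
      have : (m':ℤ) ≡ (m:ℤ) [ZMOD (d:ℤ)] := Int.modEq_iff_dvd.mpr h2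
      have := this.symm
      unfold Int.ModEq at this
      have := this
      omega
    have hmm' : m / d = m' / d := hmm
    calc m = d * (m / d) + m % d := (Nat.div_add_mod m d).symm
      _ = d * (m' / d) + m' % d := by rw [hmm', h3]
      _ = m' := Nat.div_add_mod m' d

/-- For `k ≥ 2` and a finite nonempty set `P` of integers, there is a translate
`t` making every element of `P + t` `k`-free iff for every prime `p` the
residues of `P` modulo `p^k` do not cover all of `ℤ/p^kℤ`. -/
theorem exists_translate_kfree_iff (k : ℕ) (hk : 2 ≤ k)
    (P : Finset ℤ) (hP : P.Nonempty) :
    (∃ t : ℤ, ∀ p ∈ P, KFree k (p + t)) ↔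
      (∀ p : ℕ, p.Prime →
        ¬ (∀ r : ZMod (p^k), ∃ q ∈ P, (q : ZMod (p^k)) = r)) := by
  classical
  constructor
  · rintro ⟨t, ht⟩ p hp hcov
    haveI : NeZero (p^k) := ⟨pow_ne_zero _ hp.ne_zero⟩
    obtain ⟨q, hqP, hq⟩ := hcov (-(t : ZMod (p^k)))
    have h0 : ((q + t : ℤ) : ZMod (p^k)) = 0 := by push_cast [hq]; ring
    have hdvd : ((p^k : ℕ) : ℤ) ∣ q + t := (ZMod.intCast_zmod_eq_zero_iff_dvd _ _).mp h0
    exact ht q hqP p hp (by push_cast at hdvd; exact hdvd)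
  · intro H
    set n := P.card with hn
    have hn1 : 1 ≤ n := Finset.card_pos.mpr hP
    set B := 8 * n with hB
    have miss : ∀ q : ℕ, q.Prime → ∃ r : ZMod (q^k), ∀ p ∈ P, (p : ZMod (q^k)) ≠ r := by
      intro q hq
      have h := H q hq
      push_neg at h
      exact h
    choose r hr using miss
    set S₀ := (Finset.range (B+1)).filter Nat.Prime with hS₀
    have hS₀p : ∀ q ∈ S₀, Nat.Prime q := fun q hq => (Finset.mem_filter.mp hq).2
    set f : ℕ → ℤ := fun q => if h : q.Prime then -(((r q h).val : ℤ)) else 0 with hf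
    obtain ⟨a₀, ha₀⟩ := crt_aux k S₀ hS₀p f
    set M := ∏ q ∈ S₀, q^k with hM
    have hM1 : 1 ≤ M := Finset.one_le_prod' (fun q hq =>
      Nat.one_le_pow _ _ (hS₀p q hq).pos)
    set C := P.sup (fun p => p.natAbs) with hC
    have hCle : ∀ p ∈ P, p.natAbs ≤ C := fun p hp => Finset.le_sup hp
    set a : ℤ := a₀ + M * (a₀.natAbs + C + 1) with ha
    have haC : (C : ℤ) < a := by
      have h1 : (1:ℤ) * ((a₀.natAbs:ℤ) + C + 1) ≤ (M:ℤ) * ((a₀.natAbs:ℤ) + C + 1) := by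
        apply mul_le_mul_of_nonneg_right
        · exact_mod_cast hM1
        · positivity
      have h2 : -((a₀.natAbs:ℤ)) ≤ a₀ := by
        rw [← Int.abs_eq_natAbs]; exact neg_abs_le a₀
      have : a = a₀ + M * ((a₀.natAbs:ℤ) + C + 1) := by rw [ha]; try push_cast; try ring
      rw [this]; linarith
    have ha0 : 0 ≤ a := le_trans (by positivity) haC.le
    have hacong : ∀ q ∈ S₀, ((q:ℤ)^k) ∣ a - f q := by
      intro q hq
      have h2 : ((q:ℤ)^k) ∣ (M:ℤ) := by
        have : q^k ∣ M := Finset.dvd_prod_of_mem _ hq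
        exact_mod_cast Int.natCast_dvd_natCast.mpr this
      have e : a - f q = (a₀ - f q) + (M:ℤ) * ((a₀.natAbs:ℤ) + C + 1) := by
        rw [ha]; try push_cast; try ring
      rw [e]
      exact dvd_add (ha₀ q hq) ((h2.mul_right _))
    set A := a.toNat with hA
    have hAa : (A:ℤ) = a := Int.toNat_of_nonneg ha0
    set D := C + A + M with hD
    set N := 4 * n^2 * D + 1 with hN
    have hN1 : 1 ≤ N := by omega
    set X := C + A + M * N with hX
    -- value bounds
    have hval : ∀ p ∈ P, ∀ m ∈ Finset.Icc 1 N, 0 < p + a + M * m ∧ p + a + M * m ≤ (X:ℤ) := by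
      intro p hp m hm
      simp only [Finset.mem_Icc] at hm
      have h1 : -(C:ℤ) ≤ p := by
        have := hCle p hp
        have h2 : (p.natAbs : ℤ) ≤ C := by exact_mod_cast this
        rw [← Int.abs_eq_natAbs] at h2
        linarith [neg_abs_le p]
      have h2 : p ≤ (C:ℤ) := by
        have := hCle p hp
        have h2 : (p.natAbs : ℤ) ≤ C := by exact_mod_cast this
        rw [← Int.abs_eq_natAbs] at h2
        linarith [le_abs_self p]
      have h3 : (1:ℤ) ≤ (M:ℤ) * m := by
        have : (1:ℤ) ≤ (M:ℤ) := by exact_mod_cast hM1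
        have hm1 : (1:ℤ) ≤ (m:ℤ) := by exact_mod_cast hm.1
        nlinarith
      have h4 : (M:ℤ) * m ≤ (M:ℤ) * N := by
        have : (m:ℤ) ≤ (N:ℤ) := by exact_mod_cast hm.2
        have hMpos : (0:ℤ) ≤ (M:ℤ) := by positivity
        exact mul_le_mul_of_nonneg_left this hMpos
      constructor
      · linarith
      · have : (X:ℤ) = (C:ℤ) + A + M * N := by rw [hX]; try push_cast; try ring
        rw [this, ← hAa] at *
        linarith
    set Sq := Nat.sqrt X with hSq
    set Q := (Finset.Ioc B Sq).filter Nat.Prime with hQ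
    set bad := (Finset.Icc 1 N).filter
      (fun m : ℕ => ∃ q : ℕ, q.Prime ∧ B < q ∧ ∃ p ∈ P, (q:ℤ)^k ∣ p + a + (M:ℤ) * (m:ℤ)) with hbad
    clear_value n B S₀ f M C a A D N X Sq Q bad
    -- large prime q dividing a value must be ≤ Sq
    have hqle : ∀ q : ℕ, q.Prime → ∀ v : ℤ, 0 < v → v ≤ (X:ℤ) → (q:ℤ)^k ∣ v → q ≤ Sq := by
      intro q hq v hv hvX hdvd
      have h1 : (q:ℤ)^k ≤ v := Int.le_of_dvd hv hdvd
      have h2 : ((q^k : ℕ) : ℤ) ≤ (X:ℤ) := by push_cast; linarith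
      have h3 : q^k ≤ X := by exact_mod_cast h2
      have h4 : q^2 ≤ q^k := Nat.pow_le_pow_right hq.pos hk
      have h5 : q * q ≤ X := by
        have : q * q = q^2 := by ring
        omega
      rw [hSq]
      exact Nat.le_sqrt.mpr h5
    -- coprimality of large prime powers with M
    have hQcop : ∀ q : ℕ, q.Prime → B < q → Nat.Coprime (q^k) M := by
      intro q hq hBq
      apply Nat.Coprime.pow_left
      have hndvd : ¬ q ∣ M := by
        intro hdvd
        rw [hM] at hdvd
        obtain ⟨q', hq'S, hq'd⟩ := hq.prime.exists_mem_finset_dvd hdvd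
        have h1 : q ∣ q' := hq.dvd_of_dvd_pow hq'd
        have hq'p := hS₀p q' hq'S
        have h2 : q = q' := (Nat.prime_dvd_prime_iff_eq hq hq'p).mp h1
        rw [hS₀] at hq'S
        have h3 := (Finset.mem_filter.mp hq'S).1
        rw [Finset.mem_range] at h3
        omega
      exact (Nat.Prime.coprime_iff_not_dvd hq).mpr hndvd
    have hsubset : bad ⊆ (P ×ˢ Q).biUnion (fun pq =>
        (Finset.Icc 1 N).filter (fun m : ℕ => ((pq.2:ℤ))^k ∣ pq.1 + a + (M:ℤ) * (m:ℤ))) := by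
      intro m hm
      rw [hbad, Finset.mem_filter] at hm
      obtain ⟨hmIcc, q, hq, hBq, p, hpP, hdvd⟩ := hm
      have hv := hval p hpP m hmIcc
      have hqSq : q ≤ Sq := hqle q hq _ hv.1 hv.2 hdvd
      apply Finset.mem_biUnion.mpr
      refine ⟨(p, q), ?_, ?_⟩
      · rw [Finset.mem_product]
        refine ⟨hpP, ?_⟩
        rw [hQ, Finset.mem_filter, Finset.mem_Ioc]
        exact ⟨⟨hBq, hqSq⟩, hq⟩
      · rw [Finset.mem_filter]
        exact ⟨hmIcc, hdvd⟩
    have hcount : bad.card ≤ ∑ pq ∈ P ×ˢ Q, (N / pq.2^2 + 1) := by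
      refine le_trans (Finset.card_le_card hsubset) ?_
      refine le_trans Finset.card_biUnion_le (Finset.sum_le_sum ?_)
      rintro ⟨p, q⟩ hpq
      rw [Finset.mem_product] at hpq
      obtain ⟨hpP, hqQ⟩ := hpq
      rw [hQ, Finset.mem_filter, Finset.mem_Ioc] at hqQ
      obtain ⟨⟨hBq, hqSq⟩, hq⟩ := hqQ
      have hcop : IsCoprime (((q^k : ℕ)):ℤ) ((M:ℕ):ℤ) :=
        Nat.isCoprime_iff_coprime.mpr (hQcop q hq hBq)
      have h1 := count_aux N M (q^k) (p + a) hcop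
      have heq : (((q^k : ℕ)):ℤ) = (q:ℤ)^k := by push_cast; ring
      rw [heq] at h1
      have h2 : q^2 ≤ q^k := Nat.pow_le_pow_right hq.pos hk
      have h3 : N / q^k ≤ N / q^2 := Nat.div_le_div_left h2 (Nat.pow_pos hq.pos)
      dsimp only
      exact le_trans h1 (by omega)
    have hcount2 : bad.card ≤ n * ∑ q ∈ Q, (N / q^2 + 1) := by
      refine le_trans hcount (le_of_eq ?_)
      rw [Finset.sum_product]
      dsimp only
      rw [Finset.sum_const, smul_eq_mul, hn]
    -- rational estimates
    have hQcard : Q.card ≤ Sq := by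
      have h1 : Q.card ≤ (Finset.Ioc B Sq).card :=
        Finset.card_le_card (by rw [hQ]; exact Finset.filter_subset _ _)
      rw [Nat.card_Ioc] at h1
      omega
    have hB0 : (B:ℚ) ≠ 0 := by
      have : 0 < B := by omega
      positivity
    have htail : ∑ q ∈ Q, ((N:ℚ) / (q:ℚ)^2) ≤ (N:ℚ) * (B:ℚ)⁻¹ := by
      have hsub : Q ⊆ Finset.Ioc B Sq := by rw [hQ]; exact Finset.filter_subset _ _
      have h1 : ∑ q ∈ Q, ((N:ℚ) / (q:ℚ)^2) ≤ ∑ i ∈ Finset.Ioc B Sq, ((N:ℚ) / (i:ℚ)^2) :=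
        Finset.sum_le_sum_of_subset_of_nonneg hsub (by
          intro i hi _
          have : 0 < i := by
            rw [Finset.mem_Ioc] at hi
            omega
          positivity)
      have h2 : ∑ i ∈ Finset.Ioc B Sq, ((N:ℚ) / (i:ℚ)^2)
          = (N:ℚ) * ∑ i ∈ Finset.Ioc B Sq, ((i:ℚ)^2)⁻¹ := by
        rw [Finset.mul_sum]
        refine Finset.sum_congr rfl (fun i _ => ?_)
        rw [div_eq_mul_inv]
      have h3 : ∑ i ∈ Finset.Ioc B Sq, ((i:ℚ)^2)⁻¹ ≤ (B:ℚ)⁻¹ := by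
        rcases le_or_gt B Sq with hle | hlt
        · refine le_trans (sum_Ioc_inv_sq_le_sub (by omega) hle) ?_
          have : (0:ℚ) ≤ (Sq:ℚ)⁻¹ := by positivity
          linarith
        · rw [Finset.Ioc_eq_empty (by omega), Finset.sum_empty]
          positivity
      rw [h2] at h1
      refine le_trans h1 ?_
      have hN0 : (0:ℚ) ≤ (N:ℚ) := by positivity
      exact mul_le_mul_of_nonneg_left h3 hN0
    have hnSq : 2 * n * Sq ≤ N := by
      have h1 : Sq * Sq ≤ X := by rw [hSq]; exact Nat.sqrt_le X
      have h2 : X ≤ D * N := by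
        rw [hX, hD]
        calc C + A + M * N ≤ (C + A) * N + M * N := by
              have h5 : C + A ≤ (C + A) * N := Nat.le_mul_of_pos_right _ (by omega)
              exact Nat.add_le_add_right h5 _
          _ = (C + A + M) * N := (Nat.add_mul _ _ _).symm
      have h3 : 4 * n^2 * D ≤ N := by rw [hN]; exact Nat.le_succ _
      have h4 : (2 * n * Sq)^2 ≤ N^2 := by
        calc (2 * n * Sq)^2 = 4 * n^2 * (Sq * Sq) := by ring
          _ ≤ 4 * n^2 * X := Nat.mul_le_mul_left _ h1
          _ ≤ 4 * n^2 * (D * N) := Nat.mul_le_mul_left _ h2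
          _ = (4 * n^2 * D) * N := by ring
          _ ≤ N * N := Nat.mul_le_mul_right _ h3
          _ = N^2 := by ring
      exact (Nat.pow_le_pow_iff_left (two_ne_zero)).mp h4
    have hbadlt : bad.card < N := by
      have hcast : (bad.card : ℚ) ≤ (n:ℚ) * (∑ q ∈ Q, ((N:ℚ) / (q:ℚ)^2) + (Q.card : ℚ)) := by
        have h1 : (bad.card : ℚ) ≤ (n:ℚ) * (∑ q ∈ Q, ((N / q^2 + 1 : ℕ) : ℚ)) := by
          have := hcount2
          have h2 : ((n * ∑ q ∈ Q, (N / q^2 + 1) : ℕ) : ℚ)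
              = (n:ℚ) * (∑ q ∈ Q, ((N / q^2 + 1 : ℕ) : ℚ)) := by push_cast; ring
          calc (bad.card : ℚ) ≤ ((n * ∑ q ∈ Q, (N / q^2 + 1) : ℕ) : ℚ) := by exact_mod_cast this
            _ = _ := h2
        refine le_trans h1 ?_
        have hn0 : (0:ℚ) ≤ (n:ℚ) := by positivity
        refine mul_le_mul_of_nonneg_left ?_ hn0
        have h3 : ∑ q ∈ Q, ((N / q^2 + 1 : ℕ) : ℚ)
            ≤ ∑ q ∈ Q, ((N:ℚ) / (q:ℚ)^2 + 1) := by
          refine Finset.sum_le_sum (fun q hq => ?_)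
          push_cast
          have h4 : ((N / q^2 : ℕ) : ℚ) ≤ (N:ℚ) / ((q^2 : ℕ) : ℚ) := Nat.cast_div_le
          push_cast at h4
          linarith
        refine le_trans h3 (le_of_eq ?_)
        rw [Finset.sum_add_distrib, Finset.sum_const, nsmul_eq_mul, mul_one]
      have hfin : (n:ℚ) * (∑ q ∈ Q, ((N:ℚ) / (q:ℚ)^2) + (Q.card : ℚ)) < (N:ℚ) := by
        have h1 : (n:ℚ) * ∑ q ∈ Q, ((N:ℚ) / (q:ℚ)^2) ≤ (N:ℚ) / 8 := by
          have h2 := mul_le_mul_of_nonneg_left htail (by positivity : (0:ℚ) ≤ (n:ℚ))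
          refine le_trans h2 (le_of_eq ?_)
          rw [hB]
          have hn0 : (n:ℚ) ≠ 0 := by
            have : 0 < n := hn1
            positivity
          push_cast
          field_simp
        have h3 : (n:ℚ) * (Q.card : ℚ) ≤ (N:ℚ) / 2 := by
          have h4 : 2 * n * Q.card ≤ N := by
            have := Nat.mul_le_mul_left (2 * n) hQcard
            omega
          have h5 : ((2 * n * Q.card : ℕ) : ℚ) ≤ (N:ℚ) := by exact_mod_cast h4
          push_cast at h5
          linarith
        have hNpos : (1:ℚ) ≤ (N:ℚ) := by exact_mod_cast hN1
        have hsumnn : (0:ℚ) ≤ ∑ q ∈ Q, ((N:ℚ) / (q:ℚ)^2) := by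
          refine Finset.sum_nonneg (fun q hq => ?_)
          positivity
        rw [mul_add]
        linarith
      have := lt_of_le_of_lt hcast hfin
      exact_mod_cast this
    -- pick a good m
    have hsub2 : bad ⊆ Finset.Icc 1 N := by rw [hbad]; exact Finset.filter_subset _ _
    have hne : (Finset.Icc 1 N \ bad).Nonempty := by
      rw [← Finset.card_pos, Finset.card_sdiff_of_subset hsub2, Nat.card_Icc]
      omega
    obtain ⟨m, hm⟩ := hne
    rw [Finset.mem_sdiff] at hm
    obtain ⟨hmIcc, hmgood⟩ := hm
    refine ⟨a + M * m, ?_⟩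
    intro p hpP q hq hdvd
    have hdvd' : (q:ℤ)^k ∣ p + a + (M:ℤ) * m := by
      have e : p + a + (M:ℤ) * m = p + (a + (M:ℤ) * m) := by ring
      rw [e]; exact hdvd
    by_cases hqB : q ≤ B
    · -- small prime
      have hqS₀ : q ∈ S₀ := by
        rw [hS₀, Finset.mem_filter, Finset.mem_range]
        exact ⟨by omega, hq⟩
      have h1 := hacong q hqS₀
      have hfq : f q = -(((r q hq).val : ℤ)) := by rw [hf]; simp [hq]
      have h2 : ((q:ℤ)^k) ∣ (M:ℤ) := by
        have hd : q^k ∣ M := by rw [hM]; exact Finset.dvd_prod_of_mem _ hqS₀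
        exact_mod_cast Int.natCast_dvd_natCast.mpr hd
      have h3 : (q:ℤ)^k ∣ p - (((r q hq).val : ℤ)) := by
        have e : p - (((r q hq).val : ℤ))
            = (p + a + (M:ℤ) * m) - (a - f q) - (M:ℤ) * m := by rw [hfq]; ring
        rw [e]
        exact dvd_sub (dvd_sub hdvd' h1) (h2.mul_right _)
      haveI : NeZero (q^k) := ⟨pow_ne_zero _ hq.ne_zero⟩
      have h4 : (p : ZMod (q^k)) = (((r q hq).val : ℤ) : ZMod (q^k)) := by
        have h0 : ((p - (((r q hq).val : ℤ)) : ℤ) : ZMod (q^k)) = 0 := by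
          rw [ZMod.intCast_zmod_eq_zero_iff_dvd]
          push_cast
          exact h3
        rw [Int.cast_sub] at h0
        exact sub_eq_zero.mp h0
      have h5 : (((r q hq).val : ℤ) : ZMod (q^k)) = r q hq := by
        push_cast
        exact ZMod.natCast_rightInverse (r q hq)
      rw [h5] at h4
      exact hr q hq p hpP h4
    · -- large prime
      push_neg at hqB
      apply hmgood
      rw [hbad, Finset.mem_filter]
      exact ⟨hmIcc, q, hq, hqB, p, hpP, hdvd'⟩
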